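/- Let φ be a loss function of class S, let N⁺, N⁻ ≥ 1 be integers, and let α = (α⁺, α⁻) with α⁺ ≤ N⁺ and α⁻ ≤ N⁻. If 2α⁺ ≥ N⁺ or 2α⁻ ≥ N⁻, then there exist a linearly separable training set (D⁺, D⁻) of feature vectors in ℝ² with card D⁺ = N⁺ and card D⁻ = N⁻, and an α-bounded feature attack (E⁺, E⁻) on (D⁺, D⁻), such that the infimum over all affine classifiers h of the φ-risk of h on (E⁺, E⁻) equals the infimum of the φ-risk on (E⁺, E⁻) taken over those affine classifiers h that misclassify every element of D⁺ or misclassify every element of D⁻. (Hence any empirical-risk-minimizing algorithm using a loss of class S is perfectly attackable under this attack condition.) -/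

import Mathlib

open scoped Classical BigOperators

/-- Value of the affine classifier `h = (w, b)` at feature vector `x`. -/
noncomputable def hval {p : ℕ} (h : (Fin p → ℝ) × ℝ) (x : Fin p → ℝ) : ℝ :=
  (∑ i, h.1 i * x i) + h.2

/-- Number of positive feature vectors in `S` misclassified by `h` (with multiplicity). -/
noncomputable def errPos {p : ℕ} (h : (Fin p → ℝ) × ℝ) (S : Multiset (Fin p → ℝ)) : ℕ :=
  Multiset.countP (fun x => hval h x ≤ 0) S

/-- Number of negative feature vectors in `S` misclassified by `h` (with multiplicity). -/
noncomputable def errNeg {p : ℕ} (h : (Fin p → ℝ) × ℝ) (S : Multiset (Fin p → ℝ)) : ℕ :=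
  Multiset.countP (fun x => 0 < hval h x) S

/-- `(Ep, En)` is an `(ap, an)`-bounded feature attack on `(Dp, Dn)`. -/
noncomputable def IsBFA {p : ℕ} (ap an : ℕ) (Dp Dn Ep En : Multiset (Fin p → ℝ)) : Prop :=
  Multiset.card Ep = Multiset.card Dp ∧
  Multiset.card En = Multiset.card Dn ∧
  Multiset.card (Ep - Dp) ≤ ap ∧
  Multiset.card (En - Dn) ≤ an

/-- `(Dp, Dn)` is linearly separable. -/
def LinSep {p : ℕ} (Dp Dn : Multiset (Fin p → ℝ)) : Prop :=
  ∃ h : (Fin p → ℝ) × ℝ, errPos h Dp = 0 ∧ errNeg h Dn = 0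

/-- `h` satisfies the majority constraint on `(Ep, En)`. -/
def Majority {p : ℕ} (h : (Fin p → ℝ) × ℝ) (Ep En : Multiset (Fin p → ℝ)) : Prop :=
  2 * errPos h Ep < Multiset.card Ep ∧ 2 * errNeg h En < Multiset.card En

/-- The φ-risk of the affine classifier `h` on attacked data `(Ep, En)`. -/
noncomputable def risk {p : ℕ} (φ : ℝ → ℝ) (h : (Fin p → ℝ) × ℝ)
    (Ep En : Multiset (Fin p → ℝ)) : ℝ :=
  (Ep.map fun x => φ (hval h x)).sum + (En.map fun x => φ (-(hval h x))).sum

/-- A feature point on the first axis. -/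
noncomputable def pt (x : ℝ) : Fin 2 → ℝ := fun i => if i = 0 then x else 0

lemma hval_pt (h : (Fin 2 → ℝ) × ℝ) (x : ℝ) : hval h (pt x) = h.1 0 * x + h.2 := by
  simp [hval, pt, Fin.sum_univ_two]

lemma sum_map_replicate (f : (Fin 2 → ℝ) → ℝ) (n : ℕ) (x : Fin 2 → ℝ) :
    ((Multiset.replicate n x).map f).sum = (n : ℝ) * f x := by
  rw [Multiset.map_replicate, Multiset.sum_replicate, nsmul_eq_mul]

lemma errPos_replicate_full (h : (Fin 2 → ℝ) × ℝ) (n : ℕ) (x : Fin 2 → ℝ)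
    (hx : hval h x ≤ 0) : errPos h (Multiset.replicate n x) = n := by
  have : errPos h (Multiset.replicate n x) = Multiset.card (Multiset.replicate n x) :=
    Multiset.countP_eq_card.2 fun a ha => by
      rw [Multiset.eq_of_mem_replicate ha]; exact hx
  simpa using this

lemma errNeg_replicate_full (h : (Fin 2 → ℝ) × ℝ) (n : ℕ) (x : Fin 2 → ℝ)
    (hx : 0 < hval h x) : errNeg h (Multiset.replicate n x) = n := by
  have : errNeg h (Multiset.replicate n x) = Multiset.card (Multiset.replicate n x) :=
    Multiset.countP_eq_card.2 fun a ha => by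
      rw [Multiset.eq_of_mem_replicate ha]; exact hx
  simpa using this

/-- Generic lemma: if every classifier is dominated by a "bad" one, the two infima agree. -/
lemma sInf_range_eq_sInf_image {α : Type*} [Nonempty α] (f : α → ℝ) (Bad : Set α) (L : ℝ)
    (hL : ∀ a, L ≤ f a) (hdom : ∀ a, ∃ b ∈ Bad, f b ≤ f a) :
    sInf (Set.range f) = sInf (f '' Bad) := by
  obtain ⟨a₀⟩ := ‹Nonempty α›
  obtain ⟨b₀, hb₀, _⟩ := hdom a₀
  have hbdd : BddBelow (Set.range f) := ⟨L, fun y ⟨a, ha⟩ => ha ▸ hL a⟩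
  have hbdd' : BddBelow (f '' Bad) := hbdd.mono (Set.image_subset_range f Bad)
  refine le_antisymm (csInf_le_csInf hbdd ⟨f b₀, ⟨b₀, hb₀, rfl⟩⟩ (Set.image_subset_range f Bad)) ?_
  refine le_csInf ⟨f a₀, ⟨a₀, rfl⟩⟩ ?_
  rintro y ⟨a, rfl⟩
  obtain ⟨b, hbB, hble⟩ := hdom a
  exact le_trans (csInf_le hbdd' ⟨b, hbB, rfl⟩) hble

theorem stmt4 (φ : ℝ → ℝ) (hanti : Antitone φ)
    (hge : ∀ t : ℝ, t ≤ 0 → 1 ≤ φ t) (h0 : φ 0 = 1)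
    (c : ℝ) (hc : c < 1) (hlim : Filter.Tendsto φ Filter.atTop (nhds c))
    (Np Nn ap an : ℕ) (hNp : 1 ≤ Np) (hNn : 1 ≤ Nn)
    (hap : ap ≤ Np) (han : an ≤ Nn)
    (hcond : Np ≤ 2 * ap ∨ Nn ≤ 2 * an) :
    ∃ Dp Dn Ep En : Multiset (Fin 2 → ℝ),
      Multiset.card Dp = Np ∧ Multiset.card Dn = Nn ∧
      LinSep Dp Dn ∧ IsBFA ap an Dp Dn Ep En ∧
      sInf (Set.range fun h : (Fin 2 → ℝ) × ℝ => risk φ h Ep En) =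
        sInf ((fun h : (Fin 2 → ℝ) × ℝ => risk φ h Ep En) ''
          {h | errPos h Dp = Multiset.card Dp ∨ errNeg h Dn = Multiset.card Dn}) := by
  have hφc : ∀ t : ℝ, c ≤ φ t := fun t =>
    le_of_tendsto hlim (Filter.eventually_atTop.2 ⟨t, fun s hs => hanti hs⟩)
  rcases hcond with hcase | hcase
  · -- attack the positives: move `ap` of them from `pt (-1)` to `pt 1`
    refine ⟨Multiset.replicate Np (pt (-1)), Multiset.replicate Nn (pt 0),
      Multiset.replicate (Np - ap) (pt (-1)) + Multiset.replicate ap (pt 1),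
      Multiset.replicate Nn (pt 0), by simp, by simp, ?_, ?_, ?_⟩
    · refine ⟨(fun i => if i = 0 then (-1 : ℝ) else 0, -(1/2)), ?_, ?_⟩
      · refine Multiset.countP_eq_zero.2 fun a ha => ?_
        rw [Multiset.eq_of_mem_replicate ha, hval_pt]
        norm_num
      · refine Multiset.countP_eq_zero.2 fun a ha => ?_
        rw [Multiset.eq_of_mem_replicate ha, hval_pt]
        norm_num
    · refine ⟨by simp [Nat.sub_add_cancel hap], by simp, ?_, by simp⟩
      have hle : Multiset.replicate (Np - ap) (pt (-1)) + Multiset.replicate ap (pt 1) -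
          Multiset.replicate Np (pt (-1)) ≤ Multiset.replicate ap (pt 1) := by
        rw [Multiset.sub_le_iff_le_add, add_comm]
        exact add_le_add_right ((Multiset.replicate_le_replicate _).2 (Nat.sub_le _ _)) _
      simpa using Multiset.card_le_card hle
    · set A := Np - ap with hA
      have hAle : (A : ℝ) ≤ (ap : ℝ) := by
        have : A ≤ ap := by omega
        exact_mod_cast this
      have hrisk : ∀ h : (Fin 2 → ℝ) × ℝ,
          risk φ h (Multiset.replicate A (pt (-1)) + Multiset.replicate ap (pt 1))
            (Multiset.replicate Nn (pt 0)) =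
          (A : ℝ) * φ (hval h (pt (-1))) + (ap : ℝ) * φ (hval h (pt 1)) +
            (Nn : ℝ) * φ (-(hval h (pt 0))) := by
        intro h
        rw [risk, Multiset.map_add, Multiset.sum_add, sum_map_replicate, sum_map_replicate,
          sum_map_replicate]
      apply sInf_range_eq_sInf_image _ _ (((A : ℝ) + ap + Nn) * c)
      · intro h
        rw [hrisk]
        have h1 := hφc (hval h (pt (-1)))
        have h2 := hφc (hval h (pt 1))
        have h3 := hφc (-(hval h (pt 0)))
        have hA0 : (0:ℝ) ≤ (A:ℝ) := Nat.cast_nonneg _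
        have hap0 : (0:ℝ) ≤ (ap:ℝ) := Nat.cast_nonneg _
        have hNn0 : (0:ℝ) ≤ (Nn:ℝ) := Nat.cast_nonneg _
        nlinarith [mul_le_mul_of_nonneg_left h1 hA0, mul_le_mul_of_nonneg_left h2 hap0,
          mul_le_mul_of_nonneg_left h3 hNn0]
      · intro h
        set s := hval h (pt (-1)) with hs
        set r := hval h (pt 1) with hr
        have hkey : s + r = 2 * h.2 := by rw [hs, hr, hval_pt, hval_pt]; ring
        have hb : hval h (pt 0) = h.2 := by rw [hval_pt]; ring
        by_cases hsle : s ≤ 0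
        · exact ⟨h, Or.inl (by simpa using errPos_replicate_full h Np (pt (-1)) hsle), le_refl _⟩
        by_cases hbpos : 0 < hval h (pt 0)
        · exact ⟨h, Or.inr (by simpa using errNeg_replicate_full h Nn (pt 0) hbpos), le_refl _⟩
        push_neg at hsle hbpos
        rw [hb] at hbpos
        have hrneg : r < 0 := by linarith
        refine ⟨(fun i => if i = 0 then (s - r)/2 else 0, h.2), Or.inl ?_, ?_⟩
        · have : hval ((fun i => if i = 0 then (s - r)/2 else 0 : Fin 2 → ℝ), h.2) (pt (-1)) = r := by
            rw [hval_pt]; simp; linarith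
          simpa using errPos_replicate_full _ Np (pt (-1)) (by rw [this]; linarith)
        · rw [hrisk, hrisk]
          have e1 : hval ((fun i => if i = 0 then (s - r)/2 else 0 : Fin 2 → ℝ), h.2) (pt (-1)) = r := by
            rw [hval_pt]; simp; linarith
          have e2 : hval ((fun i => if i = 0 then (s - r)/2 else 0 : Fin 2 → ℝ), h.2) (pt 1) = s := by
            rw [hval_pt]; simp; linarith
          have e3 : hval ((fun i => if i = 0 then (s - r)/2 else 0 : Fin 2 → ℝ), h.2) (pt 0) = hval h (pt 0) := by
            rw [hval_pt, hval_pt]; simp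
          rw [e1, e2, e3, ← hs, ← hr]
          have hφsr : φ s ≤ φ r := hanti (by linarith)
          nlinarith [mul_nonneg (sub_nonneg.2 hAle) (sub_nonneg.2 hφsr)]
  · -- attack the negatives: move `an` of them from `pt (-1)` to `pt 1`
    refine ⟨Multiset.replicate Np (pt 0), Multiset.replicate Nn (pt (-1)),
      Multiset.replicate Np (pt 0),
      Multiset.replicate (Nn - an) (pt (-1)) + Multiset.replicate an (pt 1),
      by simp, by simp, ?_, ?_, ?_⟩
    · refine ⟨(fun i => if i = 0 then (1 : ℝ) else 0, 1/2), ?_, ?_⟩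
      · refine Multiset.countP_eq_zero.2 fun a ha => ?_
        rw [Multiset.eq_of_mem_replicate ha, hval_pt]
        norm_num
      · refine Multiset.countP_eq_zero.2 fun a ha => ?_
        rw [Multiset.eq_of_mem_replicate ha, hval_pt]
        norm_num
    · refine ⟨by simp, by simp [Nat.sub_add_cancel han], by simp, ?_⟩
      have hle : Multiset.replicate (Nn - an) (pt (-1)) + Multiset.replicate an (pt 1) -
          Multiset.replicate Nn (pt (-1)) ≤ Multiset.replicate an (pt 1) := by
        rw [Multiset.sub_le_iff_le_add, add_comm]
        exact add_le_add_right ((Multiset.replicate_le_replicate _).2 (Nat.sub_le _ _)) _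
      simpa using Multiset.card_le_card hle
    · set B := Nn - an with hB
      have hBle : (B : ℝ) ≤ (an : ℝ) := by
        have : B ≤ an := by omega
        exact_mod_cast this
      have hrisk : ∀ h : (Fin 2 → ℝ) × ℝ,
          risk φ h (Multiset.replicate Np (pt 0))
            (Multiset.replicate B (pt (-1)) + Multiset.replicate an (pt 1)) =
          (Np : ℝ) * φ (hval h (pt 0)) + ((B : ℝ) * φ (-(hval h (pt (-1)))) +
            (an : ℝ) * φ (-(hval h (pt 1)))) := by
        intro h
        rw [risk, Multiset.map_add, Multiset.sum_add, sum_map_replicate, sum_map_replicate,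
          sum_map_replicate]
      apply sInf_range_eq_sInf_image _ _ (((Np : ℝ) + B + an) * c)
      · intro h
        rw [hrisk]
        have h1 := hφc (hval h (pt 0))
        have h2 := hφc (-(hval h (pt (-1))))
        have h3 := hφc (-(hval h (pt 1)))
        have hB0 : (0:ℝ) ≤ (B:ℝ) := Nat.cast_nonneg _
        have han0 : (0:ℝ) ≤ (an:ℝ) := Nat.cast_nonneg _
        have hNp0 : (0:ℝ) ≤ (Np:ℝ) := Nat.cast_nonneg _
        nlinarith [mul_le_mul_of_nonneg_left h1 hNp0, mul_le_mul_of_nonneg_left h2 hB0,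
          mul_le_mul_of_nonneg_left h3 han0]
      · intro h
        set t := hval h (pt (-1)) with ht
        set q := hval h (pt 1) with hq
        have hkey : t + q = 2 * h.2 := by rw [ht, hq, hval_pt, hval_pt]; ring
        have hb : hval h (pt 0) = h.2 := by rw [hval_pt]; ring
        by_cases hble : hval h (pt 0) ≤ 0
        · exact ⟨h, Or.inl (by simpa using errPos_replicate_full h Np (pt 0) hble), le_refl _⟩
        by_cases htpos : 0 < t
        · exact ⟨h, Or.inr (by simpa using errNeg_replicate_full h Nn (pt (-1)) htpos), le_refl _⟩
        push_neg at hble htpos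
        rw [hb] at hble
        have hqpos : 0 < q := by linarith
        refine ⟨(fun i => if i = 0 then (t - q)/2 else 0, h.2), Or.inr ?_, ?_⟩
        · have : hval ((fun i => if i = 0 then (t - q)/2 else 0 : Fin 2 → ℝ), h.2) (pt (-1)) = q := by
            rw [hval_pt]; simp; linarith
          simpa using errNeg_replicate_full _ Nn (pt (-1)) (by rw [this]; linarith)
        · rw [hrisk, hrisk]
          have e1 : hval ((fun i => if i = 0 then (t - q)/2 else 0 : Fin 2 → ℝ), h.2) (pt (-1)) = q := by
            rw [hval_pt]; simp; linarith
          have e2 : hval ((fun i => if i = 0 then (t - q)/2 else 0 : Fin 2 → ℝ), h.2) (pt 1) = t := by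
            rw [hval_pt]; simp; linarith
          have e3 : hval ((fun i => if i = 0 then (t - q)/2 else 0 : Fin 2 → ℝ), h.2) (pt 0) = hval h (pt 0) := by
            rw [hval_pt, hval_pt]; simp
          rw [e1, e2, e3, ← ht, ← hq]
          nlinarith [mul_nonneg (sub_nonneg.2 hBle) (sub_nonneg.2 (hanti (by linarith : -q ≤ -t) : φ (-t) ≤ φ (-q)))]
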